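/- Subadditivity of facet content: for a (d+1)-simplex with vertices x_0, …, x_{d+1} in a real Hilbert space, the d-dimensional content of any facet is at most the sum of the d-dimensional contents of the other d+1 facets; consequently max over all d+2 facets of the d-content is at most (d+1) times the max over the d+1 facets not containing a fixed distinguished facet index. -/

import Mathlib

/-- The `n`-content: square root of the Gram determinant of the vectors `v`. -/
noncomputable def gramContent {H : Type*} [NormedAddCommGroup H] [InnerProductSpace ℝ H]
    {n : ℕ} (v : Fin n → H) : ℝ :=
  Real.sqrt (Matrix.det (Matrix.of fun i j => (inner ℝ (v i) (v j) : ℝ)))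

namespace Stmt15Aux

open Finset Matrix

variable {d : ℕ}


/-- Generalized cross product of `d` vectors in `ℝ^(d+1)`, defined componentwise by
determinants. -/
noncomputable def cross (d : ℕ) (v : Fin d → (Fin (d+1) → ℝ)) : Fin (d+1) → ℝ :=
  fun j => (Matrix.of (Fin.cons (Pi.single j 1) v)).det

lemma det_cons (v : Fin d → (Fin (d+1) → ℝ)) (w : Fin (d+1) → ℝ) :
    (Matrix.of (Fin.cons w v)).det = ∑ j, w j * cross d v j := by
  rw [Matrix.det_succ_row_zero]
  refine Finset.sum_congr rfl fun j _ => ?_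
  have hm : ((Matrix.of (Fin.cons (Pi.single j (1:ℝ)) v)).submatrix Fin.succ j.succAbove)
      = ((Matrix.of (Fin.cons w v)).submatrix Fin.succ j.succAbove) := by
    ext p q; simp [Fin.cons_succ]
  have hc : cross d v j
      = (-1)^(j:ℕ) * ((Matrix.of (Fin.cons w v)).submatrix Fin.succ j.succAbove).det := by
    rw [cross, Matrix.det_succ_row_zero, Finset.sum_eq_single j]
    · rw [hm]; simp
    · intro b _ hb
      simp [Pi.single_eq_of_ne hb]
    · simp
  rw [hc]
  simp only [Matrix.of_apply, Fin.cons_zero]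
  ring

lemma orth (v : Fin d → (Fin (d+1) → ℝ)) (k : Fin d) :
    ∑ j, v k j * cross d v j = 0 := by
  rw [← det_cons]
  refine Matrix.det_zero_of_row_eq (i := 0) (j := k.succ) (Fin.succ_ne_zero k).symm ?_
  funext j
  simp [Fin.cons_zero, Fin.cons_succ]

lemma cross_sq (v : Fin d → (Fin (d+1) → ℝ)) :
    (∑ j, cross d v j ^ 2) ^ 2 =
      (∑ j, cross d v j ^ 2) * (Matrix.of fun a b : Fin d => ∑ c, v a c * v b c).det := by
  set M : Matrix (Fin (d+1)) (Fin (d+1)) ℝ := Matrix.of (Fin.cons (cross d v) v) with hM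
  have hdetM : M.det = ∑ j, cross d v j ^ 2 := by
    rw [hM, det_cons]
    exact Finset.sum_congr rfl fun j _ => (sq _).symm
  have h1 : (M * Mᵀ).det = (∑ j, cross d v j ^ 2) ^ 2 := by
    rw [Matrix.det_mul, Matrix.det_transpose, hdetM, sq]
  have h00 : (M * Mᵀ) 0 0 = ∑ j, cross d v j ^ 2 := by
    simp [Matrix.mul_apply, hM, sq]
  have hz : ∀ b : Fin d, (M * Mᵀ) 0 b.succ = 0 := by
    intro b
    have h : (M * Mᵀ) 0 b.succ = ∑ c, v b c * cross d v c := by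
      simp [Matrix.mul_apply, hM, mul_comm]
    rw [h, orth]
  have hsub : (M * Mᵀ).submatrix Fin.succ Fin.succ
      = Matrix.of fun a b : Fin d => ∑ c, v a c * v b c := by
    ext a b
    simp [Matrix.mul_apply, hM]
  have h2 : (M * Mᵀ).det
      = (∑ j, cross d v j ^ 2) * (Matrix.of fun a b : Fin d => ∑ c, v a c * v b c).det := by
    rw [Matrix.det_succ_row_zero, Fin.sum_univ_succ]
    have hrest : ∀ b : Fin d,
        (-1:ℝ)^((b.succ : Fin (d+1)):ℕ) * (M * Mᵀ) 0 b.succ *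
          ((M * Mᵀ).submatrix Fin.succ (b.succ).succAbove).det = 0 := by
      intro b; rw [hz b]; ring
    rw [Finset.sum_congr rfl fun b _ => hrest b]
    simp only [Finset.sum_const_zero, add_zero]
    rw [h00]
    have : (0 : Fin (d+1)).succAbove = Fin.succ := Fin.succAbove_zero
    rw [this, hsub]
    simp
  rw [← h1, h2]

lemma crossZero_det (v : Fin d → (Fin (d+1) → ℝ)) (hc : ∀ j, cross d v j = 0) :
    (Matrix.of fun a b : Fin d => ∑ c, v a c * v b c).det = 0 := by
  classical
  by_contra h
  -- the rows v are linearly independent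
  have hv : LinearIndependent ℝ v := by
    rw [Fintype.linearIndependent_iff]
    intro g hg i
    by_contra hgi
    have hg0 : ∀ c, ∑ b, g b * v b c = 0 := by
      intro c
      have := congrFun hg c
      simpa [Finset.sum_apply] using this
    have hmv : (Matrix.of fun a b : Fin d => ∑ c, v a c * v b c).mulVec g = 0 := by
      funext a
      show ∑ b, (∑ c, v a c * v b c) * g b = 0
      have : ∑ b, (∑ c, v a c * v b c) * g b = ∑ c, v a c * ∑ b, g b * v b c := by
        simp_rw [Finset.sum_mul]
        rw [Finset.sum_comm]
        refine Finset.sum_congr rfl fun c _ => ?_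
        rw [Finset.mul_sum]
        refine Finset.sum_congr rfl fun b _ => by ring
      rw [this]
      simp [hg0]
    exact h (Matrix.exists_mulVec_eq_zero_iff.mp
      ⟨g, fun h0 => hgi (congrFun h0 i), hmv⟩)
  have hsp : Submodule.span ℝ (Set.range v) ≠ ⊤ := by
    intro htop
    have h1 := finrank_range_le_card (R := ℝ) v
    rw [Set.finrank, htop, finrank_top, Module.finrank_pi] at h1
    simp at h1
  obtain ⟨w, hw⟩ : ∃ w, w ∉ Submodule.span ℝ (Set.range v) := by
    by_contra hAll
    push_neg at hAll
    exact hsp (Submodule.eq_top_iff'.mpr hAll)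
  have hwv : LinearIndependent ℝ (Fin.cons w v : Fin (d+1) → (Fin (d+1) → ℝ)) :=
    linearIndependent_fin_cons.mpr ⟨hv, hw⟩
  have hdet0 : (Matrix.of (Fin.cons w v)).det = 0 := by
    rw [det_cons]; simp [hc]
  have hdetT : (Matrix.of (Fin.cons w v)).transpose.det = 0 := by
    rw [Matrix.det_transpose]; exact hdet0
  obtain ⟨g, hg0, hgv⟩ := Matrix.exists_mulVec_eq_zero_iff.mpr hdetT
  have hcomb : ∑ a, g a • (Fin.cons w v : Fin (d+1) → (Fin (d+1) → ℝ)) a = 0 := by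
    funext j
    have := congrFun hgv j
    simp only [Matrix.mulVec, dotProduct, Matrix.transpose_apply, Matrix.of_apply,
      Pi.zero_apply] at this
    simpa [Finset.sum_apply, mul_comm] using this
  exact hg0 (funext fun i => Fintype.linearIndependent_iff.mp hwv g hcomb i)

lemma sqrt_cross_sq (v : Fin d → (Fin (d+1) → ℝ)) :
    Real.sqrt (∑ j, cross d v j ^ 2)
      = Real.sqrt ((Matrix.of fun a b : Fin d => ∑ c, v a c * v b c).det) := by
  rcases eq_or_ne (∑ j, cross d v j ^ 2) 0 with h0 | h0
  · have hc : ∀ j, cross d v j = 0 := by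
      intro j
      have := (Finset.sum_eq_zero_iff_of_nonneg (fun i _ => sq_nonneg _)).mp h0 j (mem_univ j)
      exact sq_eq_zero_iff.mp this
    rw [h0, crossZero_det v hc]
  · have h2 : (∑ j, cross d v j ^ 2) * (∑ j, cross d v j ^ 2)
        = (∑ j, cross d v j ^ 2) * (Matrix.of fun a b : Fin d => ∑ c, v a c * v b c).det := by
      rw [← sq]; exact cross_sq v
    rw [mul_left_cancel₀ h0 h2]


lemma rowred (r : Fin (d+1) → ℝ) (z : Fin (d+1) → (Fin (d+1) → ℝ)) :
    (Matrix.of (Fin.cons (Fin.cons 0 r) (fun k : Fin (d+1) => Fin.cons (1:ℝ) (z k)))).det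
      = - (Matrix.of (Fin.cons r (fun j : Fin d => z j.succ - z 0))).det := by
  set A : Matrix (Fin (d+2)) (Fin (d+2)) ℝ :=
    Matrix.of (Fin.cons (Fin.cons (0:ℝ) r) (fun k : Fin (d+1) => Fin.cons (1:ℝ) (z k))) with hA
  set B : Matrix (Fin (d+2)) (Fin (d+2)) ℝ :=
    Matrix.of (Fin.cons (Fin.cons (0:ℝ) r)
      (Fin.cons (Fin.cons (1:ℝ) (z 0)) (fun j : Fin d => Fin.cons (0:ℝ) (z j.succ - z 0)))) with hB
  have h1 : (1 : Fin (d+2)) = ((0 : Fin (d+1)).succ : Fin (d+2)) := rfl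
  have hAB : B.det = A.det := by
    refine Matrix.det_eq_of_forall_row_eq_smul_add_const
      (c := Fin.cons 0 (Fin.cons 0 (fun _ : Fin d => (-1:ℝ)))) (k := 1) ?_ ?_
    · rw [h1, Fin.cons_succ, Fin.cons_zero]
    · intro i j
      refine Fin.cases ?_ (fun p => ?_) i
      · simp [hA, hB, Fin.cons_zero]
      · refine Fin.cases ?_ (fun q => ?_) p
        · rw [h1]
          simp only [hA, hB, Matrix.of_apply, Fin.cons_succ, Fin.cons_zero]
          ring
        · rw [h1]
          simp only [hA, hB, Matrix.of_apply, Fin.cons_succ, Fin.cons_zero]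
          refine Fin.cases ?_ (fun c' => ?_) j
          · simp only [Fin.cons_zero, Pi.sub_apply]
            norm_num
          · simp only [Fin.cons_succ, Pi.sub_apply]
            ring
  rw [← hAB, Matrix.det_succ_column_zero, Fin.sum_univ_succ, Fin.sum_univ_succ]
  have hB00 : B 0 0 = 0 := by simp [hB, Fin.cons_zero]
  have hB10 : B ((0 : Fin (d+1)).succ) 0 = 1 := by
    simp [hB, Fin.cons_succ, Fin.cons_zero]
  have hBq0 : ∀ q : Fin d, B ((q.succ : Fin (d+1)).succ) 0 = 0 := by
    intro q; simp [hB, Fin.cons_succ, Fin.cons_zero]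
  have hmin : B.submatrix ((0 : Fin (d+1)).succ).succAbove Fin.succ
      = Matrix.of (Fin.cons r (fun q : Fin d => z q.succ - z 0)) := by
    ext p q'
    refine Fin.cases ?_ (fun t => ?_) p
    · rw [Matrix.submatrix_apply, Fin.succ_succAbove_zero]
      simp [hB, Fin.cons_zero, Fin.cons_succ]
    · rw [Matrix.submatrix_apply, Fin.succ_succAbove_succ]
      simp [hB, Fin.cons_succ, Fin.succAbove_zero]
  have hz : ∀ q : Fin d,
      (-1:ℝ)^((((q.succ : Fin (d+1)).succ : Fin (d+2))):ℕ) * B ((q.succ : Fin (d+1)).succ) 0 *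
        (B.submatrix ((q.succ : Fin (d+1)).succ).succAbove Fin.succ).det = 0 := by
    intro q; rw [hBq0 q]; ring
  rw [Finset.sum_congr rfl fun q _ => hz q, hB00, hB10, hmin]
  simp


lemma minkowski (Y : Fin (d+2) → (Fin (d+1) → ℝ)) (j₀ : Fin (d+1)) :
    ∑ m : Fin (d+2), (-1:ℝ)^(m:ℕ) *
      cross d (fun j : Fin d => Y (m.succAbove j.succ) - Y (m.succAbove 0)) j₀ = 0 := by
  classical
  set r : Fin (d+1) → ℝ := Pi.single j₀ 1 with hr
  set w : Fin (d+3) → (Fin (d+2) → ℝ) :=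
    Fin.cons (Fin.cons 0 r) (fun m : Fin (d+2) => Fin.cons 1 (Y m)) with hw
  set R : Matrix (Fin (d+3)) (Fin (d+3)) ℝ :=
    Matrix.of (fun a b : Fin (d+3) => (Fin.cons (w a 0) (w a) : Fin (d+3) → ℝ) b) with hR
  have h1 : (1 : Fin (d+3)) = ((0 : Fin (d+2)).succ : Fin (d+3)) := rfl
  have hdet : R.det = 0 := by
    refine Matrix.det_zero_of_column_eq (i := (0 : Fin (d+3))) (j := 1) ?_ ?_
    · exact zero_ne_one
    · intro a
      rw [h1]
      simp only [hR, Matrix.of_apply, Fin.cons_succ, Fin.cons_zero]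
  rw [Matrix.det_succ_column_zero, Fin.sum_univ_succ] at hdet
  have hR00 : R 0 0 = 0 := by
    simp only [hR, hw, Matrix.of_apply, Fin.cons_zero]
  have hRm0 : ∀ m : Fin (d+2), R m.succ 0 = 1 := by
    intro m
    simp only [hR, hw, Matrix.of_apply, Fin.cons_zero, Fin.cons_succ]
  have hsub : ∀ m : Fin (d+2), R.submatrix (m.succ).succAbove Fin.succ
      = Matrix.of (Fin.cons (Fin.cons 0 r)
          (fun k : Fin (d+1) => Fin.cons (1:ℝ) (Y (m.succAbove k)))) := by
    intro m
    ext p q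
    refine Fin.cases ?_ (fun t => ?_) p
    · rw [Matrix.submatrix_apply, Fin.succ_succAbove_zero]
      simp only [hR, hw, Matrix.of_apply, Fin.cons_succ, Fin.cons_zero]
    · rw [Matrix.submatrix_apply, Fin.succ_succAbove_succ]
      simp only [hR, hw, Matrix.of_apply, Fin.cons_succ, Fin.cons_zero]
  have hcross : ∀ m : Fin (d+2),
      (R.submatrix (m.succ).succAbove Fin.succ).det
        = - cross d (fun j : Fin d => Y (m.succAbove j.succ) - Y (m.succAbove 0)) j₀ := by
    intro m
    rw [hsub m, rowred r (fun k => Y (m.succAbove k))]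
    rfl
  have hfin : ∀ m : Fin (d+2),
      (-1:ℝ)^(((m.succ : Fin (d+3))):ℕ) * R m.succ 0 *
        (R.submatrix (m.succ).succAbove Fin.succ).det
      = (-1:ℝ)^(m:ℕ) *
          cross d (fun j : Fin d => Y (m.succAbove j.succ) - Y (m.succAbove 0)) j₀ := by
    intro m
    rw [hRm0 m, hcross m, Fin.val_succ, pow_succ]
    ring
  rw [hR00, Finset.sum_congr rfl fun m _ => hfin m] at hdet
  simpa using hdet


lemma facet_triangle (Y : Fin (d+2) → (Fin (d+1) → ℝ)) (i : Fin (d+2)) :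
    Real.sqrt ((Matrix.of fun a b : Fin d =>
        ∑ c, (Y (i.succAbove a.succ) - Y (i.succAbove 0)) c *
          (Y (i.succAbove b.succ) - Y (i.succAbove 0)) c).det)
      ≤ ∑ k ∈ Finset.univ.erase i, Real.sqrt ((Matrix.of fun a b : Fin d =>
          ∑ c, (Y (k.succAbove a.succ) - Y (k.succAbove 0)) c *
            (Y (k.succAbove b.succ) - Y (k.succAbove 0)) c).det) := by
  classical
  set L := (WithLp.linearEquiv 2 ℝ (Fin (d+1) → ℝ)).symm with hL
  set fv : Fin (d+2) → Fin d → (Fin (d+1) → ℝ) :=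
    fun m => fun j => Y (m.succAbove j.succ) - Y (m.succAbove 0) with hfv
  set N : Fin (d+2) → EuclideanSpace ℝ (Fin (d+1)) := fun m => L (cross d (fv m)) with hN
  have hNapp : ∀ m j, N m j = cross d (fv m) j := fun m j => rfl
  have hnorm : ∀ m, ‖N m‖ = Real.sqrt ((Matrix.of fun a b : Fin d =>
      ∑ c, fv m a c * fv m b c).det) := by
    intro m
    rw [← sqrt_cross_sq, EuclideanSpace.norm_eq]
    congr 1
    refine Finset.sum_congr rfl fun j _ => ?_
    rw [hNapp m j, Real.norm_eq_abs, sq_abs]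
  have hplain : ∑ m : Fin (d+2), ((-1:ℝ)^(m:ℕ)) • cross d (fv m) = (0 : Fin (d+1) → ℝ) := by
    funext j₀
    rw [Finset.sum_apply]
    simp only [Pi.smul_apply, smul_eq_mul]
    exact minkowski Y j₀
  have hsum : ∑ m : Fin (d+2), ((-1:ℝ)^(m:ℕ)) • N m = 0 := by
    have : ∀ m : Fin (d+2), ((-1:ℝ)^(m:ℕ)) • N m = L (((-1:ℝ)^(m:ℕ)) • cross d (fv m)) := by
      intro m; rw [_root_.map_smul]
    rw [Finset.sum_congr rfl fun m _ => this m, ← map_sum, hplain, map_zero]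
  have h2 : ((-1:ℝ)^(i:ℕ)) • N i = - ∑ k ∈ Finset.univ.erase i, ((-1:ℝ)^(k:ℕ)) • N k := by
    have h3 := Finset.add_sum_erase Finset.univ (fun m : Fin (d+2) => ((-1:ℝ)^(m:ℕ)) • N m) (mem_univ i)
    rw [hsum] at h3
    exact eq_neg_of_add_eq_zero_left h3
  calc Real.sqrt ((Matrix.of fun a b : Fin d =>
        ∑ c, (Y (i.succAbove a.succ) - Y (i.succAbove 0)) c *
          (Y (i.succAbove b.succ) - Y (i.succAbove 0)) c).det)
      = ‖N i‖ := (hnorm i).symm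
    _ = ‖((-1:ℝ)^(i:ℕ)) • N i‖ := by
        rw [norm_smul]; simp
    _ = ‖∑ k ∈ Finset.univ.erase i, ((-1:ℝ)^(k:ℕ)) • N k‖ := by rw [h2, norm_neg]
    _ ≤ ∑ k ∈ Finset.univ.erase i, ‖((-1:ℝ)^(k:ℕ)) • N k‖ := norm_sum_le _ _
    _ = _ := by
        refine Finset.sum_congr rfl fun k _ => ?_
        rw [norm_smul, hnorm k]
        simp [hfv]


lemma exists_Y {H : Type*} [NormedAddCommGroup H] [InnerProductSpace ℝ H]
    (X : Fin (d + 2) → H) :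
    ∃ Y : Fin (d+2) → (Fin (d+1) → ℝ), ∀ a b a' b' : Fin (d+2),
      ∑ c, (Y a - Y b) c * (Y a' - Y b') c = (inner ℝ (X a - X b) (X a' - X b') : ℝ) := by
  classical
  set T := Submodule.span ℝ (Set.range fun k : Fin (d+1) => X k.succ - X 0) with hT
  haveI : FiniteDimensional ℝ T := FiniteDimensional.span_of_finite ℝ (Set.finite_range _)
  have hn : Module.finrank ℝ T ≤ d + 1 := by
    have h1 := finrank_range_le_card (R := ℝ) (fun k : Fin (d+1) => X k.succ - X 0)
    rw [Set.finrank] at h1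
    simpa [hT] using h1
  set n := Module.finrank ℝ T with hnn
  set ob := stdOrthonormalBasis ℝ T with hob
  have hmem : ∀ m : Fin (d+2), X m - X 0 ∈ T := by
    intro m
    refine Fin.cases ?_ (fun k => ?_) m
    · rw [sub_self]; exact zero_mem T
    · exact Submodule.subset_span ⟨k, rfl⟩
  set t : Fin (d+2) → T := fun m => ⟨X m - X 0, hmem m⟩ with ht
  set Y : Fin (d+2) → (Fin (d+1) → ℝ) := fun m => fun j =>
    if h : (j:ℕ) < n then ob.repr (t m) ⟨j, h⟩ else 0 with hY
  refine ⟨Y, ?_⟩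
  have hkey : ∀ s u : T, ∑ c : Fin (d+1),
      (if h : (c:ℕ) < n then ob.repr s ⟨c,h⟩ else 0) *
      (if h : (c:ℕ) < n then ob.repr u ⟨c,h⟩ else 0) = (inner ℝ (s:H) (u:H) : ℝ) := by
    intro s u
    have h1 : (inner ℝ (s:H) (u:H) : ℝ) = ∑ i : Fin n, ob.repr s i * ob.repr u i := by
      rw [← Submodule.coe_inner, ← ob.repr.inner_map_map s u]
      rw [PiLp.inner_apply]
      simp [RCLike.inner_apply]
      exact Finset.sum_congr rfl fun _ _ => mul_comm _ _
    rw [h1]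
    have h2 : ∀ c : Fin (d+1), c ∉ Finset.univ.map (Fin.castLEEmb hn) →
        (if h : (c:ℕ) < n then ob.repr s ⟨c,h⟩ else 0) *
        (if h : (c:ℕ) < n then ob.repr u ⟨c,h⟩ else 0) = 0 := by
      intro c hc
      rw [dif_neg, zero_mul]
      intro hlt
      exact hc (Finset.mem_map.mpr ⟨⟨(c:ℕ), hlt⟩, Finset.mem_univ _, Fin.ext rfl⟩)
    rw [← Finset.sum_subset (Finset.subset_univ _) (fun c _ hc => h2 c hc), Finset.sum_map]
    refine Finset.sum_congr rfl fun i _ => ?_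
    have hlt : (((Fin.castLEEmb hn) i : Fin (d+1)) : ℕ) < n := i.isLt
    rw [dif_pos hlt, dif_pos hlt]
    congr 1
  intro a b a' b'
  have hYd : ∀ (p q : Fin (d+2)) (c : Fin (d+1)), (Y p - Y q) c =
      (if h : (c:ℕ) < n then ob.repr (t p - t q) ⟨c,h⟩ else 0) := by
    intro p q c
    by_cases h : (c:ℕ) < n <;> simp [hY, h, map_sub]
  have hco : ∀ p q : Fin (d+2), ((t p - t q : T) : H) = X p - X q := by
    intro p q
    rw [ht]
    simp only [Submodule.coe_sub]
    abel
  calc ∑ c, (Y a - Y b) c * (Y a' - Y b') c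
      = ∑ c : Fin (d+1), (if h : (c:ℕ) < n then ob.repr (t a - t b) ⟨c,h⟩ else 0) *
          (if h : (c:ℕ) < n then ob.repr (t a' - t b') ⟨c,h⟩ else 0) :=
        Finset.sum_congr rfl fun c _ => by rw [hYd a b c, hYd a' b' c]
    _ = (inner ℝ ((t a - t b : T) : H) ((t a' - t b' : T) : H) : ℝ) := hkey _ _
    _ = (inner ℝ (X a - X b) (X a' - X b') : ℝ) := by rw [hco, hco]

end Stmt15Aux

/-- Subadditivity of facet content: the `d`-content of any facet of a
`(d+1)`-simplex is at most the sum of the `d`-contents of the other facets;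
consequently the maximal facet content is at most `(d+1)` times the maximum over
the facets other than a fixed distinguished one. -/
theorem stmt_15 {H : Type*} [NormedAddCommGroup H] [InnerProductSpace ℝ H]
    (d : ℕ) (X : Fin (d + 2) → H) :
    (∀ i : Fin (d + 2),
      gramContent (fun j : Fin d => X (i.succAbove j.succ) - X (i.succAbove 0)) ≤
        ∑ k ∈ Finset.univ.erase i,
          gramContent (fun j : Fin d => X (k.succAbove j.succ) - X (k.succAbove 0))) ∧
    ∀ i₀ : Fin (d + 2),
      (Finset.univ.sup' Finset.univ_nonempty fun i : Fin (d + 2) =>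
          gramContent (fun j : Fin d => X (i.succAbove j.succ) - X (i.succAbove 0))) ≤
        (d + 1) *
          (Finset.univ.sup' Finset.univ_nonempty fun m : Fin (d + 1) =>
            gramContent (fun j : Fin d =>
              X ((i₀.succAbove m).succAbove j.succ) - X ((i₀.succAbove m).succAbove 0))) := by
  classical
  obtain ⟨Y, hY⟩ := Stmt15Aux.exists_Y X
  have hcontent : ∀ m : Fin (d+2),
      gramContent (fun j : Fin d => X (m.succAbove j.succ) - X (m.succAbove 0))
        = Real.sqrt ((Matrix.of fun a b : Fin d =>
            ∑ c, (Y (m.succAbove a.succ) - Y (m.succAbove 0)) c *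
              (Y (m.succAbove b.succ) - Y (m.succAbove 0)) c).det) := by
    intro m
    unfold gramContent
    congr 1
    congr 1
    ext a b
    simp only [Matrix.of_apply]
    exact (hY _ _ _ _).symm
  have key : ∀ i : Fin (d + 2),
      gramContent (fun j : Fin d => X (i.succAbove j.succ) - X (i.succAbove 0)) ≤
        ∑ k ∈ Finset.univ.erase i,
          gramContent (fun j : Fin d => X (k.succAbove j.succ) - X (k.succAbove 0)) := by
    intro i
    rw [hcontent i]
    calc Real.sqrt ((Matrix.of fun a b : Fin d =>
            ∑ c, (Y (i.succAbove a.succ) - Y (i.succAbove 0)) c *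
              (Y (i.succAbove b.succ) - Y (i.succAbove 0)) c).det)
        ≤ ∑ k ∈ Finset.univ.erase i, Real.sqrt ((Matrix.of fun a b : Fin d =>
            ∑ c, (Y (k.succAbove a.succ) - Y (k.succAbove 0)) c *
              (Y (k.succAbove b.succ) - Y (k.succAbove 0)) c).det) :=
          Stmt15Aux.facet_triangle Y i
      _ = _ := Finset.sum_congr rfl fun k _ => (hcontent k).symm
  refine ⟨key, ?_⟩
  intro i₀
  have hg : ∀ (v : Fin d → H), 0 ≤ gramContent v := fun v => Real.sqrt_nonneg _
  set S : ℝ := Finset.univ.sup' Finset.univ_nonempty fun m : Fin (d + 1) =>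
      gramContent (fun j : Fin d =>
        X ((i₀.succAbove m).succAbove j.succ) - X ((i₀.succAbove m).succAbove 0)) with hS
  have hSm : ∀ m : Fin (d+1),
      gramContent (fun j : Fin d =>
        X ((i₀.succAbove m).succAbove j.succ) - X ((i₀.succAbove m).succAbove 0)) ≤ S := by
    intro m
    rw [hS]
    exact Finset.le_sup' (fun m : Fin (d+1) => gramContent (fun j : Fin d =>
      X ((i₀.succAbove m).succAbove j.succ) - X ((i₀.succAbove m).succAbove 0)))
      (Finset.mem_univ m)
  have hS0 : (0:ℝ) ≤ S := le_trans (hg _) (hSm 0)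
  apply Finset.sup'_le
  intro i _
  by_cases hne : i = i₀
  · subst hne
    calc gramContent (fun j : Fin d => X (i.succAbove j.succ) - X (i.succAbove 0))
        ≤ ∑ k ∈ Finset.univ.erase i,
            gramContent (fun j : Fin d => X (k.succAbove j.succ) - X (k.succAbove 0)) := key i
      _ = ∑ m : Fin (d+1), gramContent (fun j : Fin d =>
            X ((i.succAbove m).succAbove j.succ) - X ((i.succAbove m).succAbove 0)) := by
          have ha := Fin.sum_univ_succAbove (fun k : Fin (d+2) =>
            gramContent (fun j : Fin d => X (k.succAbove j.succ) - X (k.succAbove 0))) i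
          have hb := Finset.add_sum_erase Finset.univ (fun k : Fin (d+2) =>
            gramContent (fun j : Fin d => X (k.succAbove j.succ) - X (k.succAbove 0)))
            (Finset.mem_univ i)
          linarith
      _ ≤ ∑ _m : Fin (d+1), S := Finset.sum_le_sum fun m _ => hSm m
      _ = (d + 1) * S := by
          rw [Finset.sum_const, Finset.card_univ, Fintype.card_fin, nsmul_eq_mul]
          push_cast
          ring
  · obtain ⟨m, hm⟩ := Fin.exists_succAbove_eq hne
    calc gramContent (fun j : Fin d => X (i.succAbove j.succ) - X (i.succAbove 0))
        = gramContent (fun j : Fin d =>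
            X ((i₀.succAbove m).succAbove j.succ) - X ((i₀.succAbove m).succAbove 0)) := by
          rw [hm]
      _ ≤ S := hSm m
      _ ≤ (d + 1) * S := le_mul_of_one_le_left hS0 (by
          have : (0:ℝ) ≤ (d:ℝ) := Nat.cast_nonneg d
          linarith)
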